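/- Suppose J ∈ ℝ and h : S → ℝ satisfy the Poisson equation J + h(s) = r(s) + (Ph)(s) for every state s, where (Ph)(s) = Σ_{s'} P(s,s') h(s'). Then for every state s, the average reward J and the normalized discounted value are close: |J − (1−γ) V_γ(s)| ≤ (1−γ) · sp(h). -/

import Mathlib

open Finset

/-- Application of a transition kernel `P` to a function `f`: `(Pf)(s) = Σ_{s'} P(s,s') f(s')`. -/
noncomputable def Pap {S : Type*} [Fintype S] (P : S → S → ℝ) (f : S → ℝ) : S → ℝ :=
  fun s => ∑ s' : S, P s s' * f s'

/-- The discounted value `V_γ(s) = Σ_{t=0}^{∞} γ^t (P^t r)(s)`. -/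
noncomputable def Vdisc {S : Type*} [Fintype S] (γ : ℝ) (P : S → S → ℝ) (r : S → ℝ) (s : S) :
    ℝ := ∑' t : ℕ, γ ^ t * (Pap P)^[t] r s

/-- The span `sp(h) = max_s h(s) − min_s h(s)`. -/
noncomputable def spanFn {S : Type*} [Fintype S] [Nonempty S] (h : S → ℝ) : ℝ :=
  Finset.univ.sup' Finset.univ_nonempty h - Finset.univ.inf' Finset.univ_nonempty h

theorem stmt_9 {S : Type*} [Fintype S] [Nonempty S]
    (P : S → S → ℝ) (hPnn : ∀ s s', 0 ≤ P s s') (hPsum : ∀ s, ∑ s' : S, P s s' = 1)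
    (r : S → ℝ) (γ : ℝ) (hγ0 : 0 ≤ γ) (hγ1 : γ < 1)
    (J : ℝ) (h : S → ℝ) (hpoisson : ∀ s, J + h s = r s + Pap P h s) :
    ∀ s, |J - (1 - γ) * Vdisc γ P r s| ≤ (1 - γ) * spanFn h := by
  intro s
  set m : ℝ := Finset.univ.inf' Finset.univ_nonempty h with hm
  set M : ℝ := Finset.univ.sup' Finset.univ_nonempty h with hM
  set a : ℕ → S → ℝ := fun t => (Pap P)^[t] h with ha
  -- bounds preserved by Pap
  have hpres : ∀ f : S → ℝ, (∀ x, m ≤ f x ∧ f x ≤ M) → ∀ x, m ≤ Pap P f x ∧ Pap P f x ≤ M := by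
    intro f hf x
    constructor
    · calc m = ∑ s' : S, P x s' * m := by rw [← Finset.sum_mul, hPsum, one_mul]
        _ ≤ ∑ s' : S, P x s' * f s' :=
          Finset.sum_le_sum fun i _ => mul_le_mul_of_nonneg_left (hf i).1 (hPnn x i)
    · calc Pap P f x = ∑ s' : S, P x s' * f s' := rfl
        _ ≤ ∑ s' : S, P x s' * M :=
          Finset.sum_le_sum fun i _ => mul_le_mul_of_nonneg_left (hf i).2 (hPnn x i)
        _ = M := by rw [← Finset.sum_mul, hPsum, one_mul]
  have hbd : ∀ t x, m ≤ a t x ∧ a t x ≤ M := by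
    intro t
    induction t with
    | zero =>
      intro x
      exact ⟨Finset.inf'_le _ (Finset.mem_univ x), Finset.le_sup' _ (Finset.mem_univ x)⟩
    | succ n ih =>
      intro x
      have : a (n+1) = Pap P (a n) := by
        simp [ha, Function.iterate_succ_apply']
      rw [this]
      exact hpres (a n) ih x
  have hmM : m ≤ M := le_trans (hbd 0 s).1 (hbd 0 s).2
  -- P^t r identity
  have hPconst : ∀ (c : ℝ) (f : S → ℝ) (x : S),
      Pap P (fun y => c + f y) x = c + Pap P f x := by
    intro c f x
    simp only [Pap, mul_add]
    rw [Finset.sum_add_distrib, ← Finset.sum_mul, hPsum, one_mul]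
  have hPsub : ∀ (f g : S → ℝ) (x : S),
      Pap P (fun y => f y - g y) x = Pap P f x - Pap P g x := by
    intro f g x
    simp only [Pap, mul_sub]
    rw [Finset.sum_sub_distrib]
  have hiter : ∀ t, (Pap P)^[t] r = fun x => J + (a t x - a (t+1) x) := by
    intro t
    induction t with
    | zero =>
      funext x
      have h0 := hpoisson x
      have h1 : a 0 x = h x := rfl
      have h2 : a (0+1) x = Pap P h x := by simp [ha]
      simp only [Function.iterate_zero, id_eq]
      rw [h1, h2]
      linarith
    | succ n ih =>
      funext x
      rw [Function.iterate_succ_apply', ih]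
      rw [hPconst J (fun y => a n y - a (n+1) y) x, hPsub]
      have h1 : Pap P (a n) = a (n+1) := by
        simp [ha, Function.iterate_succ_apply']
      have h2 : Pap P (a (n+1)) = a (n+2) := by
        simp [ha, Function.iterate_succ_apply']
      rw [h1, h2]
  -- summability
  have hγabs : |γ| < 1 := abs_lt.mpr ⟨by linarith, hγ1⟩
  have hsummgeo : Summable (fun t : ℕ => γ ^ t) := summable_geometric_of_lt_one hγ0 hγ1
  set C : ℝ := max |m| |M| with hC
  have habsbd : ∀ t x, |a t x| ≤ C := by
    intro t x
    rcases hbd t x with ⟨h1, h2⟩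
    rcases abs_le.mp (le_refl |a t x|) with _
    apply abs_le.mpr
    constructor
    · have : -|m| ≤ m := neg_abs_le m
      calc -C ≤ -|m| := neg_le_neg (le_max_left _ _)
        _ ≤ m := neg_abs_le m
        _ ≤ a t x := h1
    · exact le_trans h2 (le_trans (le_abs_self M) (le_max_right _ _))
  have hsumma : ∀ (b : ℕ → ℝ), (∀ t, |b t| ≤ C) → Summable (fun t : ℕ => γ ^ t * b t) := by
    intro b hb
    apply Summable.of_norm_bounded (hsummgeo.mul_left C)
    intro t
    rw [Real.norm_eq_abs, abs_mul, abs_pow, abs_of_nonneg hγ0, mul_comm]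
    exact mul_le_mul_of_nonneg_right (hb t) (pow_nonneg hγ0 t)
  have hs0 : Summable (fun t : ℕ => γ ^ t * a t s) := hsumma _ (fun t => habsbd t s)
  have hs1 : Summable (fun t : ℕ => γ ^ t * a (t+1) s) := hsumma _ (fun t => habsbd (t+1) s)
  have hsJ : Summable (fun t : ℕ => γ ^ t * J) := hsummgeo.mul_right J
  have hsdiff : Summable (fun t : ℕ => γ ^ t * (a t s - a (t+1) s)) := by
    have : (fun t : ℕ => γ ^ t * (a t s - a (t+1) s))
        = fun t => γ ^ t * a t s - γ ^ t * a (t+1) s := by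
      funext t; ring
    rw [this]
    exact hs0.sub hs1
  set B : ℝ := ∑' t : ℕ, γ ^ t * a (t+1) s with hB
  set A : ℝ := ∑' t : ℕ, γ ^ t * a t s with hA
  -- A = a 0 s + γ * B
  have hAB : A = a 0 s + γ * B := by
    rw [hA, Summable.tsum_eq_zero_add hs0]
    simp only [pow_zero, one_mul]
    congr 1
    rw [hB, ← tsum_mul_left]
    congr 1
    funext t
    ring
  -- V identity
  have hV : Vdisc γ P r s = J / (1 - γ) + (A - B) := by
    have hrw : (fun t : ℕ => γ ^ t * (Pap P)^[t] r s)
        = fun t : ℕ => γ ^ t * J + (γ ^ t * a t s - γ ^ t * a (t+1) s) := by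
      funext t
      rw [hiter t]
      ring
    rw [Vdisc, hrw, Summable.tsum_add hsJ (hs0.sub hs1), Summable.tsum_sub hs0 hs1]
    congr 1
    rw [tsum_mul_right, tsum_geometric_of_lt_one hγ0 hγ1]
    rw [div_eq_mul_inv, mul_comm]
  -- bounds on B
  have h1γ : (0:ℝ) < 1 - γ := by linarith
  have hBle : (1 - γ) * B ≤ M := by
    have : B ≤ ∑' t : ℕ, γ ^ t * M := by
      apply Summable.tsum_le_tsum _ hs1 (hsummgeo.mul_right M)
      intro t
      exact mul_le_mul_of_nonneg_left (hbd (t+1) s).2 (pow_nonneg hγ0 t)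
    rw [tsum_mul_right, tsum_geometric_of_lt_one hγ0 hγ1] at this
    calc (1 - γ) * B ≤ (1 - γ) * ((1 - γ)⁻¹ * M) :=
          mul_le_mul_of_nonneg_left this (le_of_lt h1γ)
      _ = M := by field_simp
  have hBge : m ≤ (1 - γ) * B := by
    have : (∑' t : ℕ, γ ^ t * m) ≤ B := by
      apply Summable.tsum_le_tsum _ (hsummgeo.mul_right m) hs1
      intro t
      exact mul_le_mul_of_nonneg_left (hbd (t+1) s).1 (pow_nonneg hγ0 t)
    rw [tsum_mul_right, tsum_geometric_of_lt_one hγ0 hγ1] at this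
    calc m = (1 - γ) * ((1 - γ)⁻¹ * m) := by field_simp
      _ ≤ (1 - γ) * B := mul_le_mul_of_nonneg_left this (le_of_lt h1γ)
  -- key expression
  have hkey : J - (1 - γ) * Vdisc γ P r s = (1 - γ) * ((1 - γ) * B - a 0 s) := by
    rw [hV, hAB]
    field_simp
    ring
  rw [hkey, abs_mul, abs_of_pos h1γ]
  apply mul_le_mul_of_nonneg_left _ (le_of_lt h1γ)
  have hsp : spanFn h = M - m := rfl
  rw [hsp]
  rcases hbd 0 s with ⟨ha0m, ha0M⟩
  apply abs_le.mpr
  constructor <;> nlinarith
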